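/- arXiv:1705.04207 — 2 statements merged into one kernel-verified Lean document; each statement's English description precedes it below -/
import Mathlib

section
/- Let P = (a,b,c) with b ≠ 0 and c ≠ 0. Setting φ = arccot(-(a/b)·(e^{c}-1)/(e^{-c}-1)), θ = arccot(b/(sin φ·(e^{c}-1))), and t = c/sin θ, the translation curve (x(s),y(s),z(s)) = (-cot θ cos φ(e^{-s sin θ}-1), cot θ sin φ(e^{s sin θ}-1), s sin θ) satisfies (x(t),y(t),z(t)) = (a,b,c). -/
/-- `arccot x = π/2 - arctan x`, the inverse cotangent with range `(0, π)`. -/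
noncomputable def arccot (x : ℝ) : ℝ := Real.pi / 2 - Real.arctan x

lemma sin_arccot_pos (x : ℝ) : 0 < Real.sin (arccot x) := by
  rw [arccot, Real.sin_pi_div_two_sub, Real.cos_arctan]
  positivity

lemma cot_arccot (x : ℝ) : Real.cot (arccot x) = x := by
  rw [Real.cot_eq_cos_div_sin, arccot, Real.cos_pi_div_two_sub,
    Real.sin_pi_div_two_sub, Real.sin_arctan, Real.cos_arctan]
  have h : Real.sqrt (1 + x ^ 2) ≠ 0 := by positivity
  field_simp

/-- The parameters `(φ, θ, t)` of Lemma 3.2 (case `b ≠ 0`, `c ≠ 0`) carry the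
translation curve from the origin to the point `(a,b,c)`. -/
theorem translation_curve_params (a b c : ℝ) (hb : b ≠ 0) (hc : c ≠ 0)
    (φ θ t : ℝ)
    (hφ : φ = arccot (-(a / b) * ((Real.exp c - 1) / (Real.exp (-c) - 1))))
    (hθ : θ = arccot (b / (Real.sin φ * (Real.exp c - 1))))
    (ht : t = c / Real.sin θ) :
    (-Real.cot θ * Real.cos φ * (Real.exp (-(t * Real.sin θ)) - 1),
      Real.cot θ * Real.sin φ * (Real.exp (t * Real.sin θ) - 1),
      t * Real.sin θ) = (a, b, c) := by
  have hsθ : 0 < Real.sin θ := hθ ▸ sin_arccot_pos _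
  have hsφ : 0 < Real.sin φ := hφ ▸ sin_arccot_pos _
  have hts : t * Real.sin θ = c := by rw [ht]; field_simp
  have hec : Real.exp c - 1 ≠ 0 := by
    simp [sub_ne_zero, Real.exp_eq_one_iff, hc]
  have hec' : Real.exp (-c) - 1 ≠ 0 := by
    simp [sub_ne_zero, Real.exp_eq_one_iff, hc]
  have hcotθ : Real.cot θ = b / (Real.sin φ * (Real.exp c - 1)) := hθ ▸ cot_arccot _
  have hcotφ : Real.cos φ / Real.sin φ =
      -(a / b) * ((Real.exp c - 1) / (Real.exp (-c) - 1)) := by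
    rw [← Real.cot_eq_cos_div_sin, hφ, cot_arccot]
  rw [hts]
  refine Prod.ext ?_ (Prod.ext ?_ rfl)
  · show -Real.cot θ * Real.cos φ * (Real.exp (-c) - 1) = a
    have : Real.cos φ = (-(a / b) * ((Real.exp c - 1) / (Real.exp (-c) - 1))) * Real.sin φ := by
      rw [← hcotφ]; field_simp
    rw [hcotθ, this]
    field_simp
  · show Real.cot θ * Real.sin φ * (Real.exp c - 1) = b
    rw [hcotθ]
    field_simp
end

section
/- Let A₁ = (0,0,0), A₂ = (a,b,0), A₃ = (a₁,b₁,0) with ab₁ - a₁b ≠ 0. For every z ∈ ℝ, the point C(z) = ((bb₁(b-b₁)e^{-2z} + a²b₁ - a₁²b)/(2(ab₁-a₁b)), (-aa₁(a-a₁)e^{2z} + ab₁² - a₁b²)/(2(ab₁-a₁b)), z) lies on both translation-like bisector surfaces S_{A₁A₂} and S_{A₁A₃}, i.e. satisfies e^{2z}a(a-2x) + b(b-2y) = 0 and e^{2z}a₁(a₁-2x) + b₁(b₁-2y) = 0. -/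
/-- The parametric curve (3.9) lies on both bisector surfaces `S_{A₁A₂}` and `S_{A₁A₃}`
for `A₁ = (0,0,0)`, `A₂ = (a,b,0)`, `A₃ = (a₁,b₁,0)` with `ab₁ - a₁b ≠ 0`. -/
theorem sol_equidistant_locus_param (a b a₁ b₁ : ℝ) (h : a * b₁ - a₁ * b ≠ 0) :
    ∀ z : ℝ,
      (Real.exp (2 * z) * a * (a - 2 *
          ((b * b₁ * (b - b₁) * Real.exp (-(2 * z)) + a ^ 2 * b₁ - a₁ ^ 2 * b) /
            (2 * (a * b₁ - a₁ * b)))) +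
        b * (b - 2 *
          ((-(a * a₁ * (a - a₁)) * Real.exp (2 * z) + a * b₁ ^ 2 - a₁ * b ^ 2) /
            (2 * (a * b₁ - a₁ * b)))) = 0) ∧
      (Real.exp (2 * z) * a₁ * (a₁ - 2 *
          ((b * b₁ * (b - b₁) * Real.exp (-(2 * z)) + a ^ 2 * b₁ - a₁ ^ 2 * b) /
            (2 * (a * b₁ - a₁ * b)))) +
        b₁ * (b₁ - 2 *
          ((-(a * a₁ * (a - a₁)) * Real.exp (2 * z) + a * b₁ ^ 2 - a₁ * b ^ 2) /
            (2 * (a * b₁ - a₁ * b)))) = 0) := by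
  intro z
  have he : Real.exp (-(2 * z)) = (Real.exp (2 * z))⁻¹ := by
    rw [Real.exp_neg]
  have hne : Real.exp (2 * z) ≠ 0 := Real.exp_ne_zero _
  have h3 : a * b₁ - b * a₁ ≠ 0 := by rwa [mul_comm b a₁]
  have h4 : b₁ * a - a₁ * b ≠ 0 := by rwa [mul_comm b₁ a]
  constructor <;> (rw [he]; field_simp; ring)
end
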